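/- Let α ∈ (0,1), F_p ∈ (0,1), F_n ∈ (0,1), and b > 0, define g : ℝ → ℝ by g(x) = F_p·α^x + (1 − F_p)·α^{x + (b − x)/F_n}, and set b₂* = F_n·log_α(F_p / ((1 − F_p)·(1/F_n − 1))), where log_α t = (ln t)/(ln α). If 0 < b₂* < b, then g(b − b₂*) < g(0); that is, the optimally sandwiched learned Bloom filter has strictly smaller false positive rate than the learned Bloom filter that devotes all bm bits to the backup filter. -/

import Mathlib

/-- For `α, F_p, F_n ∈ (0,1)`, `b > 0`,
`g(x) = F_p·α^x + (1 − F_p)·α^{x + (b − x)/F_n}` and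
`b₂* = F_n·log_α (F_p / ((1 − F_p)(1/F_n − 1)))` (where `log_α t = ln t / ln α`):
if `0 < b₂* < b` then `g(b − b₂*) < g(0)`, i.e. the optimally sandwiched learned Bloom
filter has strictly smaller false positive rate than devoting all `bm` bits to the backup
filter. -/
theorem sandwiching_strictly_improves
    (α Fp Fn b : ℝ)
    (hα : α ∈ Set.Ioo (0 : ℝ) 1) (hFp : Fp ∈ Set.Ioo (0 : ℝ) 1)
    (hFn : Fn ∈ Set.Ioo (0 : ℝ) 1) (hb : 0 < b)
    (b₂ : ℝ)
    (hb₂ : b₂ = Fn * (Real.log (Fp / ((1 - Fp) * (1 / Fn - 1))) / Real.log α))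
    (hb₂0 : 0 < b₂) (hb₂b : b₂ < b) :
    (fun x : ℝ => Fp * α ^ x + (1 - Fp) * α ^ (x + (b - x) / Fn)) (b - b₂)
      < (fun x : ℝ => Fp * α ^ x + (1 - Fp) * α ^ (x + (b - x) / Fn)) 0 := by
  obtain ⟨hα0, hα1⟩ := hα
  obtain ⟨hFp0, hFp1⟩ := hFp
  obtain ⟨hFn0, hFn1⟩ := hFn
  have hc : Real.log α < 0 := Real.log_neg hα0 hα1
  set c := Real.log α with hcdef
  have hcne : c ≠ 0 := ne_of_lt hc
  have hFnne : Fn ≠ 0 := ne_of_gt hFn0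
  have hFp1' : 0 < 1 - Fp := by linarith
  have hs1 : 1 < 1 / Fn := by rw [lt_div_iff₀ hFn0]; linarith
  have hr : 0 < 1 / Fn - 1 := by linarith
  have hT : 0 < Fp / ((1 - Fp) * (1 / Fn - 1)) :=
    div_pos hFp0 (mul_pos hFp1' hr)
  set T := Fp / ((1 - Fp) * (1 / Fn - 1)) with hTdef
  have hkey : Real.exp (c * (b₂ / Fn)) = T := by
    have h1 : c * (b₂ / Fn) = Real.log T := by
      rw [hb₂]; field_simp
    rw [h1, Real.exp_log hT]
  set x := b - b₂ with hxdef
  have hx0 : 0 < x := by simp only [hxdef]; linarith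
  set u := Real.exp (c * x) with hudef
  have hu0 : 0 < u := Real.exp_pos _
  have hu1 : u < 1 := by
    rw [hudef, show (1 : ℝ) = Real.exp 0 by simp]
    exact Real.exp_lt_exp.mpr (by nlinarith)
  -- Bernoulli
  have hB : 1 + (1 / Fn) * (u - 1) < u ^ (1 / Fn) := by
    have := one_add_mul_self_lt_rpow_one_add (s := u - 1) (by linarith)
      (by intro h; apply absurd hu1; simp [sub_eq_zero.mp h]) hs1
    simpa using this
  -- rewrite the goal
  simp only
  rw [Real.rpow_def_of_pos hα0, Real.rpow_def_of_pos hα0,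
    Real.rpow_def_of_pos hα0, Real.rpow_def_of_pos hα0]
  have e1 : c * (x + (b - x) / Fn) = c * x + c * (b₂ / Fn) := by
    simp only [hxdef]; ring
  have e2 : c * (0 + (b - 0) / Fn) = c * x * (1 / Fn) + c * (b₂ / Fn) := by
    simp only [hxdef]; field_simp; ring
  have e3 : Real.exp (c * x * (1 / Fn)) = u ^ (1 / Fn) := by
    rw [hudef]; exact Real.exp_mul _ _
  rw [e1, e2, Real.exp_add, Real.exp_add, hkey, e3, mul_zero, Real.exp_zero, ← hudef]
  -- now pure algebra
  have hTval : (1 - Fp) * T = Fp / (1 / Fn - 1) := by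
    rw [hTdef, mul_div_assoc']
    exact mul_div_mul_left Fp _ (ne_of_gt hFp1')
  have hPos : 0 < Fp / (1 / Fn - 1) := div_pos hFp0 hr
  have hmul := mul_lt_mul_of_pos_left hB hPos
  have hQr : Fp / (1 / Fn - 1) * (1 / Fn - 1) = Fp := div_mul_cancel₀ Fp (ne_of_gt hr)
  have hid : Fp / (1 / Fn - 1) * (1 + 1 / Fn * (u - 1))
      = Fp * u + Fp / (1 / Fn - 1) * u - Fp := by
    linear_combination (u - 1) * hQr
  rw [hid] at hmul
  rw [show (1 - Fp) * (u * T) = ((1 - Fp) * T) * u by ring,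
    show (1 - Fp) * (u ^ (1 / Fn) * T) = ((1 - Fp) * T) * u ^ (1 / Fn) by ring, hTval]
  linarith
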